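/- Let X, Y be finite sets with probability distributions, T : X × Y → {−1, 1}, and let A : X → Obs, B : Y → Obs be functions into the ±1-valued observables (self-adjoint unitaries) on C^N such that every A(x) commutes with every B(y). Then ‖E_{x,y} T(x,y) A(x) B(y)‖_op ≤ ( E_{x,x',y,y'} T(x,y) T(x',y) T(x,y') T(x',y') )^{1/4}, where expectations over x,x' (resp. y,y') are independent copies of the given distribution on X (resp. Y). -/

import Mathlib

open ContinuousLinearMap in
lemma opCS {H : Type*} [NormedAddCommGroup H] [InnerProductSpace ℂ H] [CompleteSpace H]
    {ι : Type*} [Fintype ι] (w : ι → ℝ) (hw : ∀ i, 0 ≤ w i)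
    (P Q : ι → H →L[ℂ] H) :
    ‖∑ i, (w i : ℂ) • (P i ∘L Q i)‖ ≤
      Real.sqrt ‖∑ i, (w i : ℂ) • (P i ∘L ContinuousLinearMap.adjoint (P i))‖ *
      Real.sqrt ‖∑ i, (w i : ℂ) • (ContinuousLinearMap.adjoint (Q i) ∘L Q i)‖ := by
  set S := ∑ i, (w i : ℂ) • (P i ∘L Q i) with hS
  set RP := ∑ i, (w i : ℂ) • (P i ∘L ContinuousLinearMap.adjoint (P i)) with hRP
  set RQ := ∑ i, (w i : ℂ) • (ContinuousLinearMap.adjoint (Q i) ∘L Q i) with hRQ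
  have keyP : ∀ u : H, ∑ i, w i * ‖ContinuousLinearMap.adjoint (P i) u‖ ^ 2 ≤ ‖RP‖ * ‖u‖ ^ 2 := by
    intro u
    have h1 : (∑ i, w i * ‖ContinuousLinearMap.adjoint (P i) u‖ ^ 2) =
        Complex.re (inner ℂ u (RP u) : ℂ) := by
      rw [hRP]
      simp only [ContinuousLinearMap.sum_apply, ContinuousLinearMap.smul_apply,
        ContinuousLinearMap.comp_apply, inner_sum, inner_smul_right, Complex.re_sum]
      refine Finset.sum_congr rfl fun i _ => ?_
      have h2 : (inner ℂ u (P i (ContinuousLinearMap.adjoint (P i) u)) : ℂ)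
          = ((‖ContinuousLinearMap.adjoint (P i) u‖ ^ 2 : ℝ) : ℂ) := by
        rw [← ContinuousLinearMap.adjoint_inner_left, inner_self_eq_norm_sq_to_K]
        norm_cast
      rw [h2, Complex.re_ofReal_mul, Complex.ofReal_re]
    rw [h1]
    calc Complex.re (inner ℂ u (RP u) : ℂ) ≤ ‖(inner ℂ u (RP u) : ℂ)‖ := Complex.re_le_norm _
      _ ≤ ‖u‖ * ‖RP u‖ := norm_inner_le_norm _ _
      _ ≤ ‖u‖ * (‖RP‖ * ‖u‖) := by gcongr; exact le_opNorm _ _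
      _ = ‖RP‖ * ‖u‖ ^ 2 := by ring
  have keyQ : ∀ u : H, ∑ i, w i * ‖Q i u‖ ^ 2 ≤ ‖RQ‖ * ‖u‖ ^ 2 := by
    intro u
    have h1 : (∑ i, w i * ‖Q i u‖ ^ 2) = Complex.re (inner ℂ u (RQ u) : ℂ) := by
      rw [hRQ]
      simp only [ContinuousLinearMap.sum_apply, ContinuousLinearMap.smul_apply,
        ContinuousLinearMap.comp_apply, inner_sum, inner_smul_right, Complex.re_sum]
      refine Finset.sum_congr rfl fun i _ => ?_
      rw [ContinuousLinearMap.adjoint_inner_right, inner_self_eq_norm_sq_to_K,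
        Complex.re_ofReal_mul]
      norm_cast
    rw [h1]
    calc Complex.re (inner ℂ u (RQ u) : ℂ) ≤ ‖(inner ℂ u (RQ u) : ℂ)‖ := Complex.re_le_norm _
      _ ≤ ‖u‖ * ‖RQ u‖ := norm_inner_le_norm _ _
      _ ≤ ‖u‖ * (‖RQ‖ * ‖u‖) := by gcongr; exact le_opNorm _ _
      _ = ‖RQ‖ * ‖u‖ ^ 2 := by ring
  refine opNorm_le_bound _ (by positivity) fun v => ?_
  have hmain : ‖S v‖ ^ 2 ≤ Real.sqrt ‖RQ‖ * ‖v‖ * (Real.sqrt ‖RP‖ * ‖S v‖) := by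
    have h0 : (‖S v‖ : ℝ) ^ 2 = Complex.re (inner ℂ (S v) (S v) : ℂ) := by
      rw [inner_self_eq_norm_sq_to_K]; norm_cast
    have expand : S v = ∑ i, (w i : ℂ) • (P i (Q i v)) := by
      rw [hS]; simp
    have h1 : Complex.re (inner ℂ (S v) (S v) : ℂ) =
        ∑ i, w i * Complex.re (inner ℂ (Q i v) (ContinuousLinearMap.adjoint (P i) (S v)) : ℂ) := by
      nth_rewrite 1 [expand]
      rw [sum_inner, Complex.re_sum]
      refine Finset.sum_congr rfl fun i _ => ?_
      rw [inner_smul_left, ← ContinuousLinearMap.adjoint_inner_right, Complex.conj_ofReal,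
        Complex.re_ofReal_mul]
    have h2 : ∀ i, w i * Complex.re (inner ℂ (Q i v) (ContinuousLinearMap.adjoint (P i) (S v)) : ℂ)
        ≤ (Real.sqrt (w i) * ‖Q i v‖) * (Real.sqrt (w i) * ‖ContinuousLinearMap.adjoint (P i) (S v)‖) := by
      intro i
      have hr := re_inner_le_norm (𝕜 := ℂ) (Q i v) (ContinuousLinearMap.adjoint (P i) (S v))
      have he : (Real.sqrt (w i) * ‖Q i v‖) * (Real.sqrt (w i) * ‖ContinuousLinearMap.adjoint (P i) (S v)‖)
          = w i * (‖Q i v‖ * ‖ContinuousLinearMap.adjoint (P i) (S v)‖) := by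
        rw [mul_mul_mul_comm, Real.mul_self_sqrt (hw i)]
      rw [he]
      exact mul_le_mul_of_nonneg_left hr (hw i)
    have h3 : ∑ i, (Real.sqrt (w i) * ‖Q i v‖) * (Real.sqrt (w i) * ‖ContinuousLinearMap.adjoint (P i) (S v)‖)
        ≤ Real.sqrt (∑ i, (Real.sqrt (w i) * ‖Q i v‖) ^ 2) *
          Real.sqrt (∑ i, (Real.sqrt (w i) * ‖ContinuousLinearMap.adjoint (P i) (S v)‖) ^ 2) :=
      Real.sum_mul_le_sqrt_mul_sqrt _ _ _
    have e1 : ∀ i : ι, (Real.sqrt (w i) * ‖Q i v‖) ^ 2 = w i * ‖Q i v‖ ^ 2 := by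
      intro i; rw [mul_pow, Real.sq_sqrt (hw i)]
    have e2 : ∀ i : ι, (Real.sqrt (w i) * ‖ContinuousLinearMap.adjoint (P i) (S v)‖) ^ 2
        = w i * ‖ContinuousLinearMap.adjoint (P i) (S v)‖ ^ 2 := by
      intro i; rw [mul_pow, Real.sq_sqrt (hw i)]
    calc ‖S v‖ ^ 2 = ∑ i, w i * Complex.re (inner ℂ (Q i v) (ContinuousLinearMap.adjoint (P i) (S v)) : ℂ) := by
            rw [h0, h1]
      _ ≤ ∑ i, (Real.sqrt (w i) * ‖Q i v‖) * (Real.sqrt (w i) * ‖ContinuousLinearMap.adjoint (P i) (S v)‖) :=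
            Finset.sum_le_sum fun i _ => h2 i
      _ ≤ Real.sqrt (∑ i, (Real.sqrt (w i) * ‖Q i v‖) ^ 2) *
          Real.sqrt (∑ i, (Real.sqrt (w i) * ‖ContinuousLinearMap.adjoint (P i) (S v)‖) ^ 2) := h3
      _ = Real.sqrt (∑ i, w i * ‖Q i v‖ ^ 2) *
          Real.sqrt (∑ i, w i * ‖ContinuousLinearMap.adjoint (P i) (S v)‖ ^ 2) := by
            simp_rw [e1, e2]
      _ ≤ Real.sqrt (‖RQ‖ * ‖v‖ ^ 2) * Real.sqrt (‖RP‖ * ‖S v‖ ^ 2) := by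
            gcongr
            · exact keyQ v
            · exact keyP (S v)
      _ = Real.sqrt ‖RQ‖ * ‖v‖ * (Real.sqrt ‖RP‖ * ‖S v‖) := by
            rw [Real.sqrt_mul (norm_nonneg _), Real.sqrt_mul (norm_nonneg _),
              Real.sqrt_sq (norm_nonneg _), Real.sqrt_sq (norm_nonneg _)]
  rcases eq_or_lt_of_le (norm_nonneg (S v)) with h | h
  · rw [← h]; positivity
  · have h2 : ‖S v‖ ≤ Real.sqrt ‖RQ‖ * ‖v‖ * Real.sqrt ‖RP‖ := by
      rw [pow_two] at hmain
      exact le_of_mul_le_mul_right (by linarith) h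
    calc ‖S v‖ ≤ Real.sqrt ‖RQ‖ * ‖v‖ * Real.sqrt ‖RP‖ := h2
      _ = Real.sqrt ‖RP‖ * Real.sqrt ‖RQ‖ * ‖v‖ := by ring

set_option maxHeartbeats 1000000 in

open ContinuousLinearMap in
/-- Cauchy–Schwarz bound for the entangled bias of a two-player XOR game:
`‖E_{x,y} T(x,y) A(x) B(y)‖ ≤ (E_{x,x',y,y'} T(x,y)T(x',y)T(x,y')T(x',y'))^{1/4}`. -/
theorem xor_bias_le_fourth_moment (N : ℕ) {X Y : Type*} [Fintype X] [Fintype Y]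
    (pX : X → ℝ) (pY : Y → ℝ)
    (hpX : ∀ x, 0 ≤ pX x) (hpY : ∀ y, 0 ≤ pY y)
    (hX1 : ∑ x, pX x = 1) (hY1 : ∑ y, pY y = 1)
    (T : X → Y → ℝ) (hT : ∀ x y, T x y = 1 ∨ T x y = -1)
    (A : X → (EuclideanSpace ℂ (Fin N) →L[ℂ] EuclideanSpace ℂ (Fin N)))
    (B : Y → (EuclideanSpace ℂ (Fin N) →L[ℂ] EuclideanSpace ℂ (Fin N)))
    (hAsa : ∀ x, ContinuousLinearMap.adjoint (A x) = A x)
    (hBsa : ∀ y, ContinuousLinearMap.adjoint (B y) = B y)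
    (hA2 : ∀ x, (A x) ∘L (A x) = ContinuousLinearMap.id ℂ (EuclideanSpace ℂ (Fin N)))
    (hB2 : ∀ y, (B y) ∘L (B y) = ContinuousLinearMap.id ℂ (EuclideanSpace ℂ (Fin N)))
    (hcomm : ∀ x y, (A x) ∘L (B y) = (B y) ∘L (A x)) :
    ‖∑ x, ∑ y, ((pX x * pY y * T x y : ℝ) : ℂ) • ((A x) ∘L (B y))‖ ≤
      (∑ x, ∑ x', ∑ y, ∑ y',
          pX x * pX x' * pY y * pY y' * (T x y * T x' y * T x y' * T x' y'))
        ^ ((1 : ℝ) / 4) := by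

  set C : Y → (EuclideanSpace ℂ (Fin N) →L[ℂ] EuclideanSpace ℂ (Fin N)) := fun y => ∑ x, ((pX x * T x y : ℝ) : ℂ) • A x with hC
  -- rewrite LHS
  have hsum : ∑ x, ∑ y, ((pX x * pY y * T x y : ℝ) : ℂ) • ((A x) ∘L (B y)) =
      ∑ y, ((pY y : ℝ) : ℂ) • (C y ∘L B y) := by
    rw [Finset.sum_comm]
    refine Finset.sum_congr rfl fun y _ => ?_
    rw [hC]
    rw [ContinuousLinearMap.finset_sum_comp, Finset.smul_sum]
    refine Finset.sum_congr rfl fun x _ => ?_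
    rw [ContinuousLinearMap.smul_comp, smul_smul]
    congr 1
    push_cast
    ring
  rw [hsum]
  -- norms of A, B
  have hAn : ∀ x, ‖A x‖ ≤ 1 := by
    intro x
    have h := ContinuousLinearMap.norm_adjoint_comp_self (A x)
    rw [hAsa, hA2] at h
    nlinarith [ContinuousLinearMap.norm_id_le (𝕜 := ℂ) (E := EuclideanSpace ℂ (Fin N)), norm_nonneg (A x)]
  -- adjoint of C
  have hadjC : ∀ y, ContinuousLinearMap.adjoint (C y) = C y := by
    intro y
    rw [← ContinuousLinearMap.star_eq_adjoint, hC]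
    simp only [star_sum, star_smul, ContinuousLinearMap.star_eq_adjoint, hAsa,
      Complex.star_def, Complex.conj_ofReal]
  -- apply operator Cauchy-Schwarz
  have hcs := opCS (H := EuclideanSpace ℂ (Fin N)) pY hpY C B
  -- second factor equals 1
  have hRQ : ∑ y, ((pY y : ℝ) : ℂ) • (ContinuousLinearMap.adjoint (B y) ∘L B y) =
      ContinuousLinearMap.id ℂ (EuclideanSpace ℂ (Fin N)) := by
    have : ∀ y : Y, ((pY y : ℝ) : ℂ) • (ContinuousLinearMap.adjoint (B y) ∘L B y)
        = ((pY y : ℝ) : ℂ) • ContinuousLinearMap.id ℂ (EuclideanSpace ℂ (Fin N)) := by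
      intro y; rw [hBsa, hB2]
    rw [Finset.sum_congr rfl fun y _ => this y, ← Finset.sum_smul,
      ← Complex.ofReal_sum, hY1]
    simp
  set c : X → X → ℝ := fun x x' => ∑ y, pY y * (T x y * T x' y) with hc
  set D : ℝ := ∑ x, ∑ x', pX x * pX x' * |c x x'| with hD
  set F : ℝ := ∑ x, ∑ x', ∑ y, ∑ y',
      pX x * pX x' * pY y * pY y' * (T x y * T x' y * T x y' * T x' y') with hF
  -- expand C y ∘L C y
  have e : ∀ y, ((pY y : ℝ) : ℂ) • (C y ∘L C y) =
      ∑ x, ∑ x', ((pY y * (pX x * T x y) * (pX x' * T x' y) : ℝ) : ℂ) • (A x' ∘L A x) := by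
    intro y
    simp only [hC, ContinuousLinearMap.finset_sum_comp, ContinuousLinearMap.comp_finset_sum,
      ContinuousLinearMap.smul_comp, ContinuousLinearMap.comp_smul, Finset.smul_sum, smul_smul]
    refine Finset.sum_congr rfl fun x _ => Finset.sum_congr rfl fun x' _ => ?_
    congr 1
    push_cast
    ring
  have hsum2 : ∑ y, ((pY y : ℝ) : ℂ) • (C y ∘L C y) =
      ∑ x, ∑ x', ((pX x * pX x' * c x x' : ℝ) : ℂ) • (A x' ∘L A x) := by
    rw [Finset.sum_congr rfl fun y (_ : y ∈ Finset.univ) => e y, Finset.sum_comm]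
    refine Finset.sum_congr rfl fun x _ => ?_
    rw [Finset.sum_comm]
    refine Finset.sum_congr rfl fun x' _ => ?_
    rw [← Finset.sum_smul]
    congr 1
    rw [← Complex.ofReal_sum]
    congr 1
    rw [hc, Finset.mul_sum]
    exact Finset.sum_congr rfl fun y _ => by ring
  -- norm bound on the first factor
  have NRP : ‖∑ y, ((pY y : ℝ) : ℂ) • (C y ∘L C y)‖ ≤ D := by
    rw [hsum2, hD]
    refine (norm_sum_le _ _).trans ?_
    refine Finset.sum_le_sum fun x _ => ?_
    refine (norm_sum_le _ _).trans ?_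
    refine Finset.sum_le_sum fun x' _ => ?_
    rw [norm_smul ((pX x * pX x' * c x x' : ℝ) : ℂ) ((A x') ∘L (A x))]
    have h1 : ‖((pX x * pX x' * c x x' : ℝ) : ℂ)‖ = pX x * pX x' * |c x x'| := by
      rw [Complex.norm_real, Real.norm_eq_abs, abs_mul, abs_mul, abs_of_nonneg (hpX x), abs_of_nonneg (hpX x')]
    rw [h1]
    have h2 : ‖A x' ∘L A x‖ ≤ 1 := by
      refine (ContinuousLinearMap.opNorm_comp_le _ _).trans ?_
      calc ‖A x'‖ * ‖A x‖ ≤ 1 * 1 := by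
            exact mul_le_mul (hAn x') (hAn x) (norm_nonneg _) zero_le_one
        _ = 1 := one_mul 1
    calc pX x * pX x' * |c x x'| * ‖A x' ∘L A x‖ ≤ pX x * pX x' * |c x x'| * 1 := by
          exact mul_le_mul_of_nonneg_left h2
            (mul_nonneg (mul_nonneg (hpX x) (hpX x')) (abs_nonneg _))
      _ = pX x * pX x' * |c x x'| := mul_one _
  -- F as sum of squares
  have hFsq : F = ∑ x, ∑ x', pX x * pX x' * (c x x') ^ 2 := by
    rw [hF]
    refine Finset.sum_congr rfl fun x _ => Finset.sum_congr rfl fun x' _ => ?_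
    have hsymm : pX x * pX x' * (c x x') ^ 2 = ∑ y, ∑ y',
        pX x * pX x' * pY y * pY y' * (T x y * T x' y * T x y' * T x' y') := by
      rw [hc, pow_two, Finset.sum_mul_sum, Finset.mul_sum]
      refine Finset.sum_congr rfl fun y _ => ?_
      rw [Finset.mul_sum]
      exact Finset.sum_congr rfl fun y' _ => by ring
    exact hsymm.symm
  have hF0 : 0 ≤ F := by
    rw [hFsq]
    refine Finset.sum_nonneg fun x _ => Finset.sum_nonneg fun x' _ => ?_
    have := hpX x; have := hpX x'; positivity
  -- D ≤ sqrt F via scalar Cauchy-Schwarz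
  have hDF : D ≤ Real.sqrt F := by
    have key := Real.sum_mul_le_sqrt_mul_sqrt (Finset.univ : Finset (X × X))
      (fun p => Real.sqrt (pX p.1 * pX p.2))
      (fun p => Real.sqrt (pX p.1 * pX p.2) * |c p.1 p.2|)
    have e1 : ∀ p : X × X, Real.sqrt (pX p.1 * pX p.2) *
        (Real.sqrt (pX p.1 * pX p.2) * |c p.1 p.2|) = pX p.1 * pX p.2 * |c p.1 p.2| := by
      intro p
      rw [← mul_assoc, Real.mul_self_sqrt (mul_nonneg (hpX p.1) (hpX p.2))]
    have e2 : ∀ p : X × X, Real.sqrt (pX p.1 * pX p.2) ^ 2 = pX p.1 * pX p.2 := fun p =>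
      Real.sq_sqrt (mul_nonneg (hpX p.1) (hpX p.2))
    have e3 : ∀ p : X × X, (Real.sqrt (pX p.1 * pX p.2) * |c p.1 p.2|) ^ 2
        = pX p.1 * pX p.2 * (c p.1 p.2) ^ 2 := by
      intro p
      rw [mul_pow, Real.sq_sqrt (mul_nonneg (hpX p.1) (hpX p.2)), sq_abs]
    simp only [e1, e2, e3] at key
    have hL : D = ∑ p : X × X, pX p.1 * pX p.2 * |c p.1 p.2| := by
      rw [hD, Fintype.sum_prod_type]
    have hs1 : (∑ p : X × X, pX p.1 * pX p.2) = 1 := by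
      rw [Fintype.sum_prod_type]
      have hx : ∀ x : X, (∑ x', pX x * pX x') = pX x := by
        intro x; rw [← Finset.mul_sum, hX1, mul_one]
      rw [Finset.sum_congr rfl fun x _ => hx x, hX1]
    have hs2 : (∑ p : X × X, pX p.1 * pX p.2 * (c p.1 p.2) ^ 2) = F := by
      rw [hFsq, Fintype.sum_prod_type]
    rw [hL]
    calc (∑ p : X × X, pX p.1 * pX p.2 * |c p.1 p.2|)
        ≤ Real.sqrt (∑ p : X × X, pX p.1 * pX p.2) *
          Real.sqrt (∑ p : X × X, pX p.1 * pX p.2 * (c p.1 p.2) ^ 2) := key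
      _ = Real.sqrt F := by rw [hs1, hs2, Real.sqrt_one, one_mul]
  -- put everything together
  have hadj : ∀ y : Y, C y ∘L ContinuousLinearMap.adjoint (C y) = C y ∘L C y := by
    intro y; rw [hadjC]
  simp only [hadj, hRQ] at hcs
  have hfinal : ‖∑ y, ((pY y : ℝ) : ℂ) • (C y ∘L B y)‖ ≤ Real.sqrt (Real.sqrt F) := by
    refine hcs.trans ?_
    have h1 : Real.sqrt ‖ContinuousLinearMap.id ℂ (EuclideanSpace ℂ (Fin N))‖ ≤ 1 := by
      rw [show (1 : ℝ) = Real.sqrt 1 from (Real.sqrt_one).symm]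
      exact Real.sqrt_le_sqrt (ContinuousLinearMap.norm_id_le)
    calc Real.sqrt ‖∑ y, ((pY y : ℝ) : ℂ) • (C y ∘L C y)‖ * Real.sqrt ‖ContinuousLinearMap.id ℂ (EuclideanSpace ℂ (Fin N))‖
        ≤ Real.sqrt D * 1 := by
          refine mul_le_mul (Real.sqrt_le_sqrt NRP) h1 (Real.sqrt_nonneg _) (Real.sqrt_nonneg _)
      _ = Real.sqrt D := mul_one _
      _ ≤ Real.sqrt (Real.sqrt F) := Real.sqrt_le_sqrt hDF
  refine hfinal.trans ?_
  rw [Real.sqrt_eq_rpow, Real.sqrt_eq_rpow, ← Real.rpow_mul hF0]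
  norm_num
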